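/- Let F be a countable abelian group, Λ a small category with a degree functor d : Λ → ℕᵏ satisfying the unique factorisation property (a k-graph), and ρ an action of F on Λ by degree-preserving automorphisms. Then the set Λ × F with degree map d(λ,g) = (d(λ),g), range r(λ,g) = (r(λ),0), source s(λ,g) = (s(ρ₋g(λ)),0), and composition (μ,g)(ν,h) = (μ·ρ_g(ν), g+h) (defined when s(μ) = r(ρ_g(ν))) is a category satisfying the unique factorisation property with respect to its degree map into ℕᵏ × F. -/

import Mathlib

/-- The raw data of a small category with degree map into `P`, presented concretely:
vertices, morphisms, range/source maps, identity morphisms, a (total) composition map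
whose value is only meaningful on composable pairs, and a degree map. -/
structure PGraphData (P : Type*) where
  V : Type
  E : Type
  r : E → V
  s : E → V
  ι : V → E
  comp : E → E → E
  d : E → P

/-- The axioms making `PGraphData` a small category with a degree functor. -/
def PGraphData.IsPGraph {P : Type*} [AddCommMonoid P] (Λ : PGraphData P) : Prop :=
  (∀ v, Λ.r (Λ.ι v) = v) ∧ (∀ v, Λ.s (Λ.ι v) = v) ∧ (∀ v, Λ.d (Λ.ι v) = 0) ∧
  (∀ f g, Λ.s f = Λ.r g →
    Λ.r (Λ.comp f g) = Λ.r f ∧ Λ.s (Λ.comp f g) = Λ.s g ∧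
      Λ.d (Λ.comp f g) = Λ.d f + Λ.d g) ∧
  (∀ f, Λ.comp (Λ.ι (Λ.r f)) f = f) ∧ (∀ f, Λ.comp f (Λ.ι (Λ.s f)) = f) ∧
  (∀ f g h, Λ.s f = Λ.r g → Λ.s g = Λ.r h →
    Λ.comp (Λ.comp f g) h = Λ.comp f (Λ.comp g h))

/-- The unique factorisation property: whenever `d f = p + q` there is a unique
composable pair `(μ, ν)` with `f = μν`, `d μ = p` and `d ν = q`. -/
def PGraphData.HasUFP {P : Type*} [AddCommMonoid P] (Λ : PGraphData P) : Prop :=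
  ∀ f p q, Λ.d f = p + q →
    ∃! mn : Λ.E × Λ.E, Λ.s mn.1 = Λ.r mn.2 ∧ Λ.comp mn.1 mn.2 = f ∧
      Λ.d mn.1 = p ∧ Λ.d mn.2 = q

/-- The crossed product `Λ ×_ρ F` of a `k`-graph `Λ` by an action of an abelian group `F`:
morphisms are pairs `(λ, g)` with `d(λ,g) = (d λ, g)`, `r(λ,g) = r λ`,
`s(λ,g) = s (ρ₋g λ)`, and composition `(μ,g)(ν,h) = (μ·ρ_g(ν), g+h)`. -/
def PGraphData.crossedProduct {k : ℕ} {F : Type} [AddCommGroup F]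
    (Λ : PGraphData (Fin k → ℕ)) (ρE : F → Λ.E → Λ.E) :
    PGraphData ((Fin k → ℕ) × F) where
  V := Λ.V
  E := Λ.E × F
  r := fun p => Λ.r p.1
  s := fun p => Λ.s (ρE (-p.2) p.1)
  ι := fun v => (Λ.ι v, 0)
  comp := fun p q => (Λ.comp p.1 (ρE p.2 q.1), p.2 + q.2)
  d := fun p => (Λ.d p.1, p.2)

/-- If `F` is a countable abelian group, `Λ` a `k`-graph (a small category
with degree functor into `ℕᵏ` satisfying the unique factorisation property), and `ρ` an
action of `F` on `Λ` by degree-preserving automorphisms, then the crossed product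
`Λ ×_ρ F` is a category satisfying the unique factorisation property with respect to its
degree map into `ℕᵏ × F`. -/
theorem crossedProduct_isPGraph_hasUFP {k : ℕ} {F : Type} [AddCommGroup F] [Countable F]
    (Λ : PGraphData (Fin k → ℕ)) [Countable Λ.E] [Countable Λ.V]
    (hΛ : Λ.IsPGraph) (hUFP : Λ.HasUFP)
    (ρE : F → Λ.E → Λ.E) (ρV : F → Λ.V → Λ.V)
    -- ρ is an action …
    (hρ_zero : ∀ f, ρE 0 f = f)
    (hρ_add : ∀ g h f, ρE g (ρE h f) = ρE (g + h) f)
    -- … by automorphisms of the `k`-graph …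
    (hρ_r : ∀ g f, Λ.r (ρE g f) = ρV g (Λ.r f))
    (hρ_s : ∀ g f, Λ.s (ρE g f) = ρV g (Λ.s f))
    (hρ_ι : ∀ g v, ρE g (Λ.ι v) = Λ.ι (ρV g v))
    (hρ_comp : ∀ g f f', Λ.s f = Λ.r f' →
      ρE g (Λ.comp f f') = Λ.comp (ρE g f) (ρE g f'))
    -- … which preserve the degree
    (hρ_d : ∀ g f, Λ.d (ρE g f) = Λ.d f) :
    (Λ.crossedProduct ρE).IsPGraph ∧ (Λ.crossedProduct ρE).HasUFP := by

  obtain ⟨hr, hs, hd0, hcomp, hidl, hidr, hassoc⟩ := hΛ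
  have key : ∀ (g : F) (x : Λ.E), Λ.s x = ρV g (Λ.s (ρE (-g) x)) := by
    intro g x
    rw [← hρ_s, hρ_add, add_neg_cancel, hρ_zero]
  have keyinv : ∀ (g : F) (x : Λ.E), ρE g (ρE (-g) x) = x := by
    intro g x; rw [hρ_add, add_neg_cancel, hρ_zero]
  constructor
  · refine ⟨fun v => hr v, ?_, ?_, ?_, ?_, ?_, ?_⟩
    · intro (v : Λ.V)
      show Λ.s (ρE (-(0:F)) (Λ.ι v)) = v
      rw [neg_zero, hρ_zero, hs]
    · intro (v : Λ.V)
      show ((Λ.d (Λ.ι v), (0:F)) : (Fin k → ℕ) × F) = 0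
      rw [hd0]; rfl
    · rintro ⟨μ, g⟩ ⟨ν, h⟩ hcmp
      simp only [PGraphData.crossedProduct] at hcmp ⊢
      have h1 : Λ.s μ = Λ.r (ρE g ν) := by
        rw [hρ_r, key g μ, hcmp]
      obtain ⟨c1, c2, c3⟩ := hcomp μ (ρE g ν) h1
      refine ⟨c1, ?_, ?_⟩
      · rw [neg_add_rev, ← hρ_add, hρ_comp _ _ _ h1]
        have : Λ.s (Λ.comp (ρE (-g) μ) (ρE (-g) (ρE g ν))) = Λ.s (ρE (-g) (ρE g ν)) := by
          exact (hcomp _ _ (by rw [hρ_s, hρ_r, h1])).2.1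
        rw [hρ_s, hρ_s, this, hρ_add, neg_add_cancel, hρ_zero]
      · rw [c3, hρ_d]; rfl
    · rintro ⟨μ, g⟩
      simp only [PGraphData.crossedProduct]
      rw [hρ_zero, hidl, zero_add]
    · rintro ⟨μ, g⟩
      simp only [PGraphData.crossedProduct]
      rw [hρ_ι, ← hρ_s, keyinv, hidr, add_zero]
    · rintro ⟨μ, g⟩ ⟨ν, h⟩ ⟨ξ, l⟩ h1 h2
      simp only [PGraphData.crossedProduct] at h1 h2 ⊢
      have c1 : Λ.s μ = Λ.r (ρE g ν) := by rw [hρ_r, key g μ, h1]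
      have c2 : Λ.s (ρE g ν) = Λ.r (ρE (g + h) ξ) := by
        rw [hρ_s, key h ν, h2, ← hρ_r, ← hρ_r, hρ_add]
      have heq : Λ.comp (Λ.comp μ (ρE g ν)) (ρE (g + h) ξ)
          = Λ.comp μ (ρE g (Λ.comp ν (ρE h ξ))) := by
        rw [hρ_comp g _ _ (by rw [key h ν, h2, hρ_r]), hρ_add, hassoc _ _ _ c1 c2]
      rw [heq, add_assoc]
  · rintro ⟨f, g⟩ ⟨p, a⟩ ⟨q, b⟩ hd
    simp only [PGraphData.crossedProduct, Prod.mk.injEq, Prod.mk_add_mk] at hd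
    obtain ⟨hdp, hg⟩ := hd
    obtain ⟨⟨μ, ν⟩, ⟨hc, hcf, hdμ, hdν⟩, huniq⟩ := hUFP f p q hdp
    refine ⟨((μ, a), (ρE (-a) ν, b)), ⟨?_, ?_, ?_, ?_⟩, ?_⟩
    · show Λ.s (ρE (-a) μ) = Λ.r (ρE (-a) ν)
      rw [hρ_s, hρ_r, hc]
    · show (Λ.comp μ (ρE a (ρE (-a) ν)), a + b) = (f, g)
      rw [keyinv, hcf, hg]
    · show ((Λ.d μ, a) : (Fin k → ℕ) × F) = (p, a)
      rw [hdμ]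
    · show ((Λ.d (ρE (-a) ν), b) : (Fin k → ℕ) × F) = (q, b)
      rw [hρ_d, hdν]
    · rintro ⟨⟨μ', a'⟩, ⟨ν', b'⟩⟩ ⟨h1, h2, h3, h4⟩
      simp only [PGraphData.crossedProduct, Prod.mk.injEq] at h1 h2 h3 h4
      obtain ⟨hdμ', ha'⟩ := h3
      obtain ⟨hdν', hb'⟩ := h4
      subst ha' hb'
      obtain ⟨h2f, _⟩ := h2
      have hc' : Λ.s μ' = Λ.r (ρE a' ν') := by
        rw [key a' μ', h1, hρ_r]
      have heq := huniq (μ', ρE a' ν') ⟨hc', h2f, hdμ', by rw [hρ_d, hdν']⟩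
      have hμ : μ' = μ := congrArg Prod.fst heq
      have hν : ρE a' ν' = ν := congrArg Prod.snd heq
      have hν' : ν' = ρE (-a') ν := by rw [← hν, hρ_add, neg_add_cancel, hρ_zero]
      simp [hμ, hν']
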